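/- The (N+1)×(N+1) symmetric matrix S := ∑_{i=2}^N a_i A_{i-1,i}(h) + b_N B_N(h) + c C - u_N u_Nᵀ, with the paper's choices h_{i,k} = -2k/(i(i+1)) for k < i, h_{i,i} = 2i/(i+1), a_i = 2(i-1)i/N², b_N = 2/N, c = 1/N², equals (u_N - (1/N)u_{N+1})(u_N - (1/N)u_{N+1})ᵀ and is therefore positive semidefinite. -/

import Mathlib

open Finset Matrix

noncomputable def hfun : ℕ → ℕ → ℝ := fun i k =>
  if k = i then 2 * i / (i + 1) else -(2 * k) / (i * (i + 1))

noncomputable def dxf (i z : ℕ) : ℝ :=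
  (if z + 1 = i - 1 then 1 else 0) - (if z + 1 = i then 1 else 0)

noncomputable def sf (i z : ℕ) : ℝ := if z < i - 1 then hfun (i - 1) (z + 1) else 0

noncomputable def aent (i z w : ℕ) : ℝ :=
  dxf i z * dxf i w - (1/2) * (dxf i z * sf i w + sf i z * dxf i w)

lemma psdvv {n : Type*} [Fintype n] (v : n → ℝ) : (Matrix.vecMulVec v v).PosSemidef := by
  have hv : Matrix.vecMulVec v v = (Matrix.replicateRow Unit v)ᴴ * Matrix.replicateRow Unit v := by
    ext i j; simp [Matrix.mul_apply, Matrix.vecMulVec_apply, Matrix.replicateRow, Matrix.replicateCol, mul_comm]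
  rw [hv]; exact Matrix.posSemidef_conjTranspose_mul_self _

lemma inner_eval (H : ℕ → ℝ) (n z : ℕ) :
    ∑ k ∈ Finset.range n, H (k + 1) * (if z + 1 = k + 1 then (1:ℝ) else 0)
      = if z < n then H (z + 1) else 0 := by
  have : ∀ k ∈ Finset.range n, H (k + 1) * (if z + 1 = k + 1 then (1:ℝ) else 0)
      = if z = k then H (k + 1) else 0 := by
    intro k hk
    by_cases h : z = k
    · simp [h]
    · rw [if_neg (by omega), if_neg h, mul_zero]
  rw [Finset.sum_congr rfl this, Finset.sum_ite_eq]
  simp [Finset.mem_range]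

lemma dsumA (H : ℕ → ℕ → ℝ) (i z : ℕ) (hi : 2 ≤ i) :
    ∑ l ∈ Finset.Icc (i - 1 - 1) (i - 2), ∑ k ∈ Finset.range (l + 1),
        H (l + 1) (k + 1) * (if z + 1 = k + 1 then (1:ℝ) else 0)
      = if z < i - 1 then H (i - 1) (z + 1) else 0 := by
  rw [show i - 1 - 1 = i - 2 by omega, Finset.Icc_self, Finset.sum_singleton,
    show i - 2 + 1 = i - 1 by omega, inner_eval]

lemma dsumB (N z : ℕ) (hN : 2 ≤ N) :
    ∑ l ∈ Finset.range (N - 1), ∑ k ∈ Finset.range (l + 1),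
        hfun (l + 1) (k + 1) * (if z + 1 = k + 1 then (1:ℝ) else 0)
      = if z + 2 ≤ N then 2 * ((z:ℝ) + 1) / (N:ℝ) else 0 := by
  have key : ∀ M : ℕ, ∑ l ∈ Finset.range M, (if z < l + 1 then hfun (l + 1) (z + 1) else 0)
      = if z + 1 ≤ M then 2 * ((z:ℝ) + 1) / ((M:ℝ) + 1) else 0 := by
    intro M
    induction M with
    | zero => simp
    | succ n ih =>
      rw [Finset.sum_range_succ, ih]
      by_cases h1 : z + 1 ≤ n
      · rw [if_pos h1, if_pos (by omega), if_pos (by omega)]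
        have hz : ¬ (z + 1 = n + 1) := by omega
        simp only [hfun, if_neg hz]
        have h2 : ((n:ℝ) + 1) ≠ 0 := by positivity
        have h3 : ((n:ℝ) + 1 + 1) ≠ 0 := by positivity
        push_cast
        field_simp
        ring
      · by_cases h2 : z = n
        · subst h2
          rw [if_neg h1, if_pos (by omega), if_pos (by omega), zero_add]
          simp only [hfun, if_pos rfl]
          push_cast
          ring
        · rw [if_neg h1, if_neg (by omega), if_neg (by omega), add_zero]
  have step : ∀ l ∈ Finset.range (N - 1),
      (∑ k ∈ Finset.range (l + 1), hfun (l + 1) (k + 1) * (if z + 1 = k + 1 then (1:ℝ) else 0))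
        = if z < l + 1 then hfun (l + 1) (z + 1) else 0 := by
    intro l _; rw [inner_eval]
  rw [Finset.sum_congr rfl step, key]
  have : ((N - 1 : ℕ) : ℝ) + 1 = (N : ℝ) := by
    have : (1:ℕ) ≤ N := by omega
    push_cast [this]
    ring
  rw [this]
  by_cases h : z + 2 ≤ N
  · rw [if_pos (by omega), if_pos h]
  · rw [if_neg (by omega), if_neg h]

lemma collapse2 (s : Finset ℕ) (c d : ℕ) (hcd : c ≠ d) (f : ℕ → ℝ)
    (hf : ∀ i ∈ s, i ≠ c → i ≠ d → f i = 0) :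
    ∑ i ∈ s, f i = (if c ∈ s then f c else 0) + (if d ∈ s then f d else 0) := by
  have key : ∀ i ∈ s, f i = (if i = c then f c else 0) + (if i = d then f d else 0) := by
    intro i hi
    by_cases h1 : i = c
    · subst h1; rw [if_pos rfl, if_neg hcd, add_zero]
    · by_cases h2 : i = d
      · subst h2; rw [if_neg h1, if_pos rfl, zero_add]
      · rw [if_neg h1, if_neg h2, add_zero, hf i hi h1 h2]
  rw [Finset.sum_congr rfl key, Finset.sum_add_distrib, Finset.sum_ite_eq', Finset.sum_ite_eq']

lemma collapse3 (s : Finset ℕ) (c d e : ℕ) (hcd : c ≠ d) (hce : c ≠ e) (hde : d ≠ e) (f : ℕ → ℝ)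
    (hf : ∀ i ∈ s, i ≠ c → i ≠ d → i ≠ e → f i = 0) :
    ∑ i ∈ s, f i = (if c ∈ s then f c else 0) + (if d ∈ s then f d else 0)
      + (if e ∈ s then f e else 0) := by
  have key : ∀ i ∈ s, f i = (if i = c then f c else 0) + (if i = d then f d else 0)
      + (if i = e then f e else 0) := by
    intro i hi
    by_cases h1 : i = c
    · subst h1; rw [if_pos rfl, if_neg hcd, if_neg hce]; ring
    · by_cases h2 : i = d
      · subst h2; rw [if_neg h1, if_pos rfl, if_neg hde]; ring
      · by_cases h3 : i = e
        · subst h3; rw [if_neg h1, if_neg h2, if_pos rfl]; ring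
        · rw [if_neg h1, if_neg h2, if_neg h3, hf i hi h1 h2 h3]; ring
  rw [Finset.sum_congr rfl key, Finset.sum_add_distrib, Finset.sum_add_distrib,
    Finset.sum_ite_eq', Finset.sum_ite_eq', Finset.sum_ite_eq']

lemma aent_zero (i z w : ℕ) (hi : 2 ≤ i) (hz1 : i ≠ z + 1) (hz2 : i ≠ z + 2)
    (hw1 : i ≠ w + 1) (hw2 : i ≠ w + 2) : aent i z w = 0 := by
  have h1 : dxf i z = 0 := by unfold dxf; rw [if_neg (by omega), if_neg (by omega)]; ring
  have h2 : dxf i w = 0 := by unfold dxf; rw [if_neg (by omega), if_neg (by omega)]; ring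
  unfold aent; rw [h1, h2]; ring

lemma aent_zero_right (i z w : ℕ) (hw1 : i ≠ w + 1) (hsmall : i ≤ w + 1) : aent i z w = 0 := by
  have h2 : dxf i w = 0 := by unfold dxf; rw [if_neg (by omega), if_neg (by omega)]; ring
  have h3 : sf i w = 0 := by unfold sf; rw [if_neg (by omega)]
  unfold aent; rw [h2, h3]; ring

lemma aent_zero_left (i z w : ℕ) (hz1 : i ≠ z + 1) (hsmall : i ≤ z + 1) : aent i z w = 0 := by
  have h2 : dxf i z = 0 := by unfold dxf; rw [if_neg (by omega), if_neg (by omega)]; ring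
  have h3 : sf i z = 0 := by unfold sf; rw [if_neg (by omega)]
  unfold aent; rw [h2, h3]; ring

lemma aent_comm (i z w : ℕ) : aent i z w = aent i w z := by unfold aent; ring

lemma aentE1 (p : ℕ) : aent (p + 1) p p = 1 := by
  unfold aent dxf sf
  rw [show p + 1 - 1 = p by omega]
  rw [if_neg (by omega), if_pos rfl, if_neg (by omega)]
  ring

lemma aentE2 (p : ℕ) : aent (p + 2) p p = 1 - 2 * ((p:ℝ) + 1) / ((p:ℝ) + 2) := by
  unfold aent dxf sf
  rw [show p + 2 - 1 = p + 1 by omega]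
  rw [if_pos rfl, if_neg (by omega), if_pos (by omega)]
  unfold hfun
  rw [if_pos rfl]
  push_cast
  ring

lemma aentE3 (p : ℕ) : aent (p + 2) p (p + 1) = -1 + ((p:ℝ) + 1) / ((p:ℝ) + 2) := by
  unfold aent dxf sf
  rw [show p + 2 - 1 = p + 1 by omega]
  rw [if_pos rfl, if_neg (by omega), if_neg (by omega), if_pos rfl,
    if_neg (by omega), if_pos (by omega)]
  unfold hfun
  rw [if_pos rfl]
  push_cast
  ring

lemma aentE4 (p : ℕ) : aent (p + 3) p (p + 1) = ((p:ℝ) + 1) / (((p:ℝ) + 2) * ((p:ℝ) + 3)) := by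
  unfold aent dxf sf
  rw [show p + 3 - 1 = p + 2 by omega]
  rw [if_neg (by omega), if_neg (by omega), if_pos rfl, if_neg (by omega),
    if_pos (by omega), if_pos (by omega)]
  unfold hfun
  rw [if_pos rfl, if_neg (by omega)]
  push_cast
  field_simp
  ring

lemma aentE5 (p q : ℕ) (hpq : p + 2 ≤ q) :
    aent (q + 1) p q = -((p:ℝ) + 1) / ((q:ℝ) * ((q:ℝ) + 1)) := by
  unfold aent dxf sf
  rw [show q + 1 - 1 = q by omega]
  rw [if_neg (by omega), if_neg (by omega), if_neg (by omega), if_pos rfl,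
    if_neg (by omega), if_pos (by omega)]
  unfold hfun
  rw [if_neg (by omega)]
  push_cast
  field_simp
  ring

lemma aentE6 (p q : ℕ) (hpq : p + 2 ≤ q) :
    aent (q + 2) p q = ((p:ℝ) + 1) / (((q:ℝ) + 1) * ((q:ℝ) + 2)) := by
  unfold aent dxf sf
  rw [show q + 2 - 1 = q + 1 by omega]
  rw [if_neg (by omega), if_neg (by omega), if_pos rfl, if_neg (by omega),
    if_pos (by omega), if_pos (by omega)]
  unfold hfun
  rw [if_pos rfl, if_neg (by omega)]
  push_cast
  field_simp
  ring

noncomputable def bent (N z w : ℕ) : ℝ :=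
  (if z + 1 = N then (1:ℝ) else 0) * (if w + 1 = N then (1:ℝ) else 0)
  - (1/2) * ((if z + 1 = N then (1:ℝ) else 0) * (if w + 1 = N + 1 then (1:ℝ) else 0)
      + (if z + 1 = N + 1 then (1:ℝ) else 0) * (if w + 1 = N then (1:ℝ) else 0))
  + (1/2) * ((if z + 1 = N then (1:ℝ) else 0) * (if w + 2 ≤ N then 2 * ((w:ℝ) + 1) / (N:ℝ) else 0)
      + (if z + 2 ≤ N then 2 * ((z:ℝ) + 1) / (N:ℝ) else 0) * (if w + 1 = N then (1:ℝ) else 0))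

set_option maxHeartbeats 4000000 in
lemma scalar_key (N p q : ℕ) (hN : 2 ≤ N) (hp : p ≤ N) (hq : q ≤ N) :
    (∑ i ∈ Finset.Icc 2 N, 2 * ((i:ℝ) - 1) * (i:ℝ) / (N:ℝ) ^ 2 * aent i p q)
      + 2 / (N:ℝ) * bent N p q
      + ((N:ℝ) ^ 2)⁻¹ * ((if p = N then (1:ℝ) else 0) * (if q = N then (1:ℝ) else 0))
      - (if p + 1 = N then (1:ℝ) else 0) * (if q + 1 = N then (1:ℝ) else 0)
    = ((if p + 1 = N then (1:ℝ) else 0) - (N:ℝ)⁻¹ * (if p = N then (1:ℝ) else 0))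
      * ((if q + 1 = N then (1:ℝ) else 0) - (N:ℝ)⁻¹ * (if q = N then (1:ℝ) else 0)) := by
  have hN0 : (N:ℝ) ≠ 0 := Nat.cast_ne_zero.mpr (by omega)
  have dp1 : ((p:ℝ) + 1) ≠ 0 := by positivity
  have dp2 : ((p:ℝ) + 2) ≠ 0 := by positivity
  have dp3 : ((p:ℝ) + 3) ≠ 0 := by positivity
  have dq1 : ((q:ℝ) + 1) ≠ 0 := by positivity
  have dq2 : ((q:ℝ) + 2) ≠ 0 := by positivity
  have dq3 : ((q:ℝ) + 3) ≠ 0 := by positivity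
  rcases Nat.lt_trichotomy p q with hlt | heq | hgt
  · have : q = p + 1 ∨ p + 2 ≤ q := by omega
    rcases this with hq1 | hq2
    · -- case B : q = p + 1
      subst hq1
      rw [collapse2 (Finset.Icc 2 N) (p+2) (p+3) (by omega) _ (by
        intro i hi h1 h2
        rcases le_or_gt i (p+2) with hle | hgt'
        · rw [aent_zero_right i p (p+1) (by omega) (by omega), mul_zero]
        · rw [aent_zero i p (p+1) (Finset.mem_Icc.mp hi).1 (by omega) (by omega) (by omega)
            (by omega), mul_zero])]
      rw [aentE3, aentE4]
      simp only [Finset.mem_Icc, bent]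
      split_ifs <;>
        first
          | (exfalso; omega)
          | (try ((have hs1 : p = 0 := by omega); subst hs1)
             try ((have hs3 : N = p + 1 := by omega); subst hs3)
             try ((have hs4 : N = p + 2 := by omega); subst hs4)
             try ((have hs5 : N = p + 3 := by omega); subst hs5)
             try ((have hs6 : p = N := by omega); subst hs6)
             push_cast
             try field_simp
             try ring)
    · -- case D : p + 2 ≤ q
      rw [collapse2 (Finset.Icc 2 N) (q+1) (q+2) (by omega) _ (by
        intro i hi h1 h2
        rcases le_or_gt i (q+1) with hle | hgt'
        · rw [aent_zero_right i p q (by omega) (by omega), mul_zero]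
        · rw [aent_zero i p q (Finset.mem_Icc.mp hi).1 (by omega) (by omega) (by omega)
            (by omega), mul_zero])]
      rw [aentE5 p q hq2, aentE6 p q hq2]
      have dq0 : (q:ℝ) ≠ 0 := Nat.cast_ne_zero.mpr (by omega)
      simp only [Finset.mem_Icc, bent]
      split_ifs <;>
        first
          | (exfalso; omega)
          | (try ((have hs1 : p = 0 := by omega); subst hs1)
             try ((have hs3 : N = q + 1 := by omega); subst hs3)
             try ((have hs4 : N = q + 2 := by omega); subst hs4)
             try ((have hs6 : q = N := by omega); subst hs6)
             push_cast
             try field_simp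
             try ring)
  · -- case A : p = q
    subst heq
    rw [collapse2 (Finset.Icc 2 N) (p+1) (p+2) (by omega) _ (by
      intro i hi h1 h2
      rw [aent_zero i p p (Finset.mem_Icc.mp hi).1 h1 h2 h1 h2, mul_zero])]
    rw [aentE1, aentE2]
    simp only [Finset.mem_Icc, bent]
    split_ifs <;>
      first
        | (exfalso; omega)
        | (try ((have hs1 : p = 0 := by omega); subst hs1)
           try ((have hs3 : N = p + 1 := by omega); subst hs3)
           try ((have hs4 : N = p + 2 := by omega); subst hs4)
           try ((have hs6 : p = N := by omega); subst hs6)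
           push_cast
           try field_simp
           try ring)
  · have : p = q + 1 ∨ q + 2 ≤ p := by omega
    rcases this with hp1 | hp2
    · -- case C : p = q + 1
      subst hp1
      rw [collapse2 (Finset.Icc 2 N) (q+2) (q+3) (by omega) _ (by
        intro i hi h1 h2
        rcases le_or_gt i (q+2) with hle | hgt'
        · rw [aent_zero_left i (q+1) q (by omega) (by omega), mul_zero]
        · rw [aent_zero i (q+1) q (Finset.mem_Icc.mp hi).1 (by omega) (by omega) (by omega)
            (by omega), mul_zero])]
      rw [aent_comm (q+2), aent_comm (q+3), aentE3, aentE4]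
      simp only [Finset.mem_Icc, bent]
      split_ifs <;>
        first
          | (exfalso; omega)
          | (try ((have hs1 : q = 0 := by omega); subst hs1)
             try ((have hs3 : N = q + 1 := by omega); subst hs3)
             try ((have hs4 : N = q + 2 := by omega); subst hs4)
             try ((have hs5 : N = q + 3 := by omega); subst hs5)
             try ((have hs6 : q = N := by omega); subst hs6)
             push_cast
             try field_simp
             try ring)
    · -- case E : q + 2 ≤ p
      rw [collapse2 (Finset.Icc 2 N) (p+1) (p+2) (by omega) _ (by
        intro i hi h1 h2
        rcases le_or_gt i (p+1) with hle | hgt'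
        · rw [aent_zero_left i p q (by omega) (by omega), mul_zero]
        · rw [aent_zero i p q (Finset.mem_Icc.mp hi).1 (by omega) (by omega) (by omega)
            (by omega), mul_zero])]
      rw [aent_comm (p+1), aent_comm (p+2), aentE5 q p hp2, aentE6 q p hp2]
      have dp0 : (p:ℝ) ≠ 0 := Nat.cast_ne_zero.mpr (by omega)
      simp only [Finset.mem_Icc, bent]
      split_ifs <;>
        first
          | (exfalso; omega)
          | (try ((have hs1 : q = 0 := by omega); subst hs1)
             try ((have hs3 : N = p + 1 := by omega); subst hs3)
             try ((have hs4 : N = p + 2 := by omega); subst hs4)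
             try ((have hs6 : p = N := by omega); subst hs6)
             push_cast
             try field_simp
             try ring)

set_option maxHeartbeats 1000000 in
/-- The SDP certificate of Lemma 2 of the paper: with the choices
`h_{i,k} = -2k/(i(i+1))` for `k < i`, `h_{i,i} = 2i/(i+1)`,
`a_i = 2(i-1)i/N²`, `b_N = 2/N`, `c = 1/N²`, the matrix
`S = ∑_{i=2}^N a_i A_{i-1,i}(h) + b_N B_N(h) + c C - u_N u_Nᵀ`
equals `(u_N - (1/N) u_{N+1})(u_N - (1/N) u_{N+1})ᵀ` and is positive semidefinite.
Indices are 1-based: `u i` is the `i`-th canonical basis vector of `ℝ^{N+1}`. -/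
theorem pep_certificate_psd (N : ℕ) (hN : 2 ≤ N) :
    let u : ℕ → (Fin (N + 1) → ℝ) := fun i j => if (j : ℕ) + 1 = i then 1 else 0
    let odot : (Fin (N + 1) → ℝ) → (Fin (N + 1) → ℝ) → Matrix (Fin (N + 1)) (Fin (N + 1)) ℝ :=
      fun v w => (1 / 2 : ℝ) • (vecMulVec v w + vecMulVec w v)
    let h : ℕ → ℕ → ℝ := fun i k =>
      if k = i then 2 * i / (i + 1) else -(2 * k) / (i * (i + 1))
    let A : ℕ → ℕ → Matrix (Fin (N + 1)) (Fin (N + 1)) ℝ := fun i j =>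
      odot (u i - u j) (u i - u j) -
        odot (u i - u j)
          (∑ l ∈ Finset.Icc (i - 1) (j - 2), ∑ k ∈ Finset.range (l + 1),
            h (l + 1) (k + 1) • u (k + 1))
    let B : ℕ → Matrix (Fin (N + 1)) (Fin (N + 1)) ℝ := fun i =>
      vecMulVec (u i) (u i) - odot (u i) (u (N + 1)) +
        odot (u i)
          (∑ l ∈ Finset.range (i - 1), ∑ k ∈ Finset.range (l + 1),
            h (l + 1) (k + 1) • u (k + 1))
    let C : Matrix (Fin (N + 1)) (Fin (N + 1)) ℝ := vecMulVec (u (N + 1)) (u (N + 1))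
    let a : ℕ → ℝ := fun i => 2 * (i - 1 : ℝ) * i / (N : ℝ) ^ 2
    let S : Matrix (Fin (N + 1)) (Fin (N + 1)) ℝ :=
      (∑ i ∈ Finset.Icc 2 N, a i • A (i - 1) i) + (2 / (N : ℝ)) • B N +
        ((N : ℝ) ^ 2)⁻¹ • C - vecMulVec (u N) (u N)
    S = vecMulVec (u N - (N : ℝ)⁻¹ • u (N + 1)) (u N - (N : ℝ)⁻¹ • u (N + 1)) ∧
      S.PosSemidef := by
  intro u odot h A B C a S
  have hh : h = hfun := rfl
  have hAmat : ∀ i, 2 ≤ i → ∀ x y : Fin (N + 1), A (i - 1) i x y = aent i ↑x ↑y := by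
    intro i hi x y
    simp only [A, odot, u, hh, Matrix.smul_apply, Matrix.add_apply, Matrix.sub_apply,
      vecMulVec_apply, Pi.sub_apply, Finset.sum_apply, Pi.smul_apply, smul_eq_mul]
    rw [dsumA hfun i ↑x hi, dsumA hfun i ↑y hi]
    unfold aent dxf sf
    ring
  have hBmat : ∀ x y : Fin (N + 1), B N x y = bent N ↑x ↑y := by
    intro x y
    simp only [B, odot, u, hh, Matrix.add_apply, Matrix.sub_apply, vecMulVec_apply,
      Matrix.smul_apply, Pi.smul_apply, Pi.add_apply, Finset.sum_apply, smul_eq_mul]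
    rw [dsumB N ↑x hN, dsumB N ↑y hN]
    unfold bent
    ring
  have key : S = vecMulVec (u N - (N : ℝ)⁻¹ • u (N + 1)) (u N - (N : ℝ)⁻¹ • u (N + 1)) := by
    ext x y
    have hsum : (∑ i ∈ Finset.Icc 2 N, a i • A (i - 1) i) x y
        = ∑ i ∈ Finset.Icc 2 N, (2 * ((i:ℝ) - 1) * (i:ℝ) / (N : ℝ) ^ 2) * aent i ↑x ↑y := by
      rw [Matrix.sum_apply]
      refine Finset.sum_congr rfl fun i hi => ?_
      rw [Matrix.smul_apply, hAmat i (Finset.mem_Icc.mp hi).1, smul_eq_mul]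
    simp only [S, C, Matrix.add_apply, Matrix.sub_apply, Matrix.smul_apply, vecMulVec_apply,
      smul_eq_mul, Pi.sub_apply, Pi.smul_apply, u]
    rw [hsum, hBmat x y]
    have hx : (x : ℕ) ≤ N := by omega
    have hy : (y : ℕ) ≤ N := by omega
    have := scalar_key N ↑x ↑y hN hx hy
    simp only [show ((x:ℕ) + 1 = N + 1) = ((x:ℕ) = N) by simp, 
      show ((y:ℕ) + 1 = N + 1) = ((y:ℕ) = N) by simp]
    linear_combination this
  refine ⟨key, ?_⟩
  rw [key]
  exact psdvv _
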